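/- Fix d ≥ 1. There exists a constant C_d > 0 depending only on d such that for every Zygmund measure μ on ℝ^d, every h > 0 and every x, t ∈ ℝ^d with |x − t| < h/2, one has |Δ₂μ(x,h) − Δ₂μ(t,h)| ≤ C_d ‖μ‖_* (|x−t|/h) log(h/|x−t| + 1). -/

import Mathlib

noncomputable section
open MeasureTheory
open scoped ENNReal NNReal

/-- The cube in `ℝ^d` centred at `x` with side length `h` and edges parallel to
the axes. -/
def ecube (d : ℕ) (x : EuclideanSpace ℝ (Fin d)) (h : ℝ) :
    Set (EuclideanSpace ℝ (Fin d)) :=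
  {y | ∀ i, x i - h / 2 ≤ y i ∧ y i < x i + h / 2}

/-- First divided difference of a signed measure on cubes:
`Δ₁μ(x,h) = μ(Q(x,h))/|Q(x,h)|`. -/
def delta1M (d : ℕ) (μ : SignedMeasure (EuclideanSpace ℝ (Fin d)))
    (x : EuclideanSpace ℝ (Fin d)) (h : ℝ) : ℝ :=
  μ (ecube d x h) / h ^ d

/-- Second divided difference of a signed measure on cubes:
`Δ₂μ(x,h) = Δ₁μ(x,h) - Δ₁μ(x,2h)`. -/
def delta2M (d : ℕ) (μ : SignedMeasure (EuclideanSpace ℝ (Fin d)))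
    (x : EuclideanSpace ℝ (Fin d)) (h : ℝ) : ℝ :=
  delta1M d μ x h - delta1M d μ x (2 * h)

/-- `M` is a bound for the Zygmund seminorm of the measure `μ`. -/
def ZygMBound (d : ℕ) (μ : SignedMeasure (EuclideanSpace ℝ (Fin d))) (M : ℝ) : Prop :=
  ∀ (x : EuclideanSpace ℝ (Fin d)) (h : ℝ), 0 < h → |delta2M d μ x h| ≤ M

/-- `μ` is a Zygmund measure. -/
def MemZygmundM (d : ℕ) (μ : SignedMeasure (EuclideanSpace ℝ (Fin d))) : Prop :=
  ∃ M, ZygMBound d μ M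

/-- The Zygmund seminorm `‖μ‖_* = sup_{x, h>0} |Δ₂μ(x,h)|` of a measure. -/
def zygMNorm (d : ℕ) (μ : SignedMeasure (EuclideanSpace ℝ (Fin d))) : ℝ :=
  sInf {M | 0 ≤ M ∧ ZygMBound d μ M}

/-- `μ` is compactly supported. -/
def CompactSupportM (d : ℕ) (μ : SignedMeasure (EuclideanSpace ℝ (Fin d))) : Prop :=
  ∃ K : Set (EuclideanSpace ℝ (Fin d)), IsCompact K ∧
    ∀ s, MeasurableSet s → Disjoint s K → μ s = 0

namespace ZygAux


abbrev ES (d : ℕ) := EuclideanSpace ℝ (Fin d)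

def pt {d : ℕ} (f : Fin d → ℝ) : ES d := WithLp.toLp 2 f

@[simp] lemma pt_apply {d : ℕ} (f : Fin d → ℝ) (i : Fin d) : pt f i = f i := rfl

lemma mem_ecube {d : ℕ} {x y : ES d} {h : ℝ} :
    y ∈ ecube d x h ↔ ∀ i, x i - h / 2 ≤ y i ∧ y i < x i + h / 2 := Iff.rfl

lemma measurable_ecube (d : ℕ) (x : ES d) (h : ℝ) : MeasurableSet (ecube d x h) := by
  have : ecube d x h
      = ⋂ i, (fun y : ES d => y i) ⁻¹' (Set.Ico (x i - h/2) (x i + h/2)) := by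
    ext y; simp [ecube, Set.mem_iInter, Set.mem_Ico]
  rw [this]
  exact MeasurableSet.iInter fun i =>
    ((EuclideanSpace.proj (𝕜 := ℝ) i).continuous.measurable) measurableSet_Ico

/-- centre of the grid cell indexed by `m` in the subdivision of `Q(c,h')` into cells
of side `σ`. -/
def gc {d : ℕ} (c : ES d) (h' σ : ℝ) (m : Fin d → ℕ) : ES d :=
  pt fun i => c i - h' / 2 + m i * σ + σ / 2

lemma mem_gc_cell {d : ℕ} {c : ES d} {h' σ : ℝ} {m : Fin d → ℕ} {y : ES d} :
    y ∈ ecube d (gc c h' σ m) σ ↔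
      ∀ i, c i - h' / 2 + m i * σ ≤ y i ∧ y i < c i - h' / 2 + (m i + 1) * σ := by
  constructor <;> intro H i <;> obtain ⟨a, b⟩ := H i <;>
    constructor <;> simp only [gc, pt_apply] at * <;> push_cast at * <;> linarith

lemma ecube_eq_iUnion {d : ℕ} (c : ES d) {σ : ℝ} (hσ : 0 < σ) (N : ℕ) :
    ecube d c (N * σ) = ⋃ k : Fin d → Fin N,
      ecube d (gc c (N * σ) σ (fun i => (k i : ℕ))) σ := by
  ext y
  simp only [Set.mem_iUnion]
  constructor
  · intro hy
    have key : ∀ i, 0 ≤ (y i - (c i - N * σ / 2)) / σ ∧ (y i - (c i - N * σ / 2)) / σ < N := by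
      intro i
      obtain ⟨a, b⟩ := hy i
      constructor
      · apply div_nonneg _ hσ.le; linarith
      · rw [div_lt_iff₀ hσ]; linarith
    refine ⟨fun i => ⟨⌊(y i - (c i - N * σ / 2)) / σ⌋₊, ?_⟩, ?_⟩
    · exact (Nat.floor_lt (key i).1).2 (key i).2
    · rw [mem_gc_cell]
      intro i
      set q := (y i - (c i - N * σ / 2)) / σ with hq
      have h1 : (⌊q⌋₊ : ℝ) ≤ q := Nat.floor_le (key i).1
      have h2 : q < ⌊q⌋₊ + 1 := Nat.lt_floor_add_one q
      have hys : y i - (c i - N * σ / 2) = q * σ := by rw [hq]; field_simp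
      constructor
      · nlinarith [mul_le_mul_of_nonneg_right h1 hσ.le]
      · nlinarith [mul_lt_mul_of_pos_right h2 hσ]
  · rintro ⟨k, hk⟩
    rw [mem_gc_cell] at hk
    intro i
    obtain ⟨a, b⟩ := hk i
    have hk1 : (k i : ℝ) + 1 ≤ N := by exact_mod_cast (k i).2
    have hk0 : (0:ℝ) ≤ (k i : ℝ) := Nat.cast_nonneg _
    constructor
    · nlinarith
    · nlinarith

lemma cells_disjoint {d : ℕ} (c : ES d) {σ : ℝ} (hσ : 0 < σ) (h' : ℝ) :
    Pairwise (Function.onFun Disjoint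
      (fun k : Fin d → ℕ => ecube d (gc c h' σ k) σ)) := by
  intro k k' hkk'
  rw [Function.onFun]
  rw [Set.disjoint_left]
  intro y hy hy'
  rw [mem_gc_cell] at hy hy'
  apply hkk'
  funext i
  by_contra hne
  rcases Nat.lt_or_ge (k i) (k' i) with hlt | hge
  · obtain ⟨_, b⟩ := hy i; obtain ⟨a, _⟩ := hy' i
    have : ((k i : ℝ) + 1) ≤ (k' i : ℝ) := by exact_mod_cast hlt
    nlinarith
  · have hlt : k' i < k i := lt_of_le_of_ne hge (by exact fun hh => hne (hh.symm))
    obtain ⟨a, _⟩ := hy i; obtain ⟨_, b⟩ := hy' i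
    have : ((k' i : ℝ) + 1) ≤ (k i : ℝ) := by exact_mod_cast hlt
    nlinarith

lemma grid_meas {d : ℕ} (μ : SignedMeasure (ES d)) (c : ES d) {σ : ℝ} (hσ : 0 < σ) (N : ℕ) :
    μ (ecube d c (N * σ)) = ∑ k : Fin d → Fin N,
      μ (ecube d (gc c (N * σ) σ (fun i => (k i : ℕ))) σ) := by
  have hdisj : Pairwise (Function.onFun Disjoint
      (fun k : Fin d → Fin N => ecube d (gc c (N * σ) σ (fun i => (k i : ℕ))) σ)) := by
    intro k k' hkk'
    refine cells_disjoint c hσ (N * σ) (fun hh => hkk' ?_)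
    funext i
    have := congrFun hh i
    exact Fin.ext (by exact_mod_cast this)
  have h2 := VectorMeasure.of_disjoint_iUnion (v := μ)
    (f := fun k : Fin d → Fin N => ecube d (gc c (N * σ) σ (fun i => (k i : ℕ))) σ)
    (fun k => measurable_ecube _ _ _) hdisj
  rw [ecube_eq_iUnion c hσ N, h2, tsum_fintype]








/-- shift of `y` by `r` in coordinate `i`. -/
def mv {d : ℕ} (y : ES d) (i : Fin d) (r : ℝ) : ES d :=
  pt fun i' => y i' + if i' = i then r else 0

/-- corner points: `y` shifted by `±h/2` in every coordinate. -/
def hc2 {d : ℕ} (y : ES d) (h : ℝ) (k : Fin d → Fin 2) : ES d :=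
  pt fun i => y i + (k i : ℕ) * h - h / 2

variable {d : ℕ} (μ : SignedMeasure (ES d))

lemma doubling (c : ES d) {s : ℝ} (hs : 0 < s) :
    delta1M d μ c (2 * s) = (∑ k : Fin d → Fin 2, delta1M d μ (hc2 c s k) s) / 2 ^ d := by
  have hg := grid_meas μ c hs 2
  have h2 : ((2 : ℕ) : ℝ) * s = 2 * s := by norm_num
  rw [h2] at hg
  have hcent : ∀ k : Fin d → Fin 2, gc c (2 * s) s (fun i => (k i : ℕ)) = hc2 c s k := by
    intro k; ext i; simp only [gc, hc2, pt_apply]; ring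
  simp only [hcent] at hg
  have hsd : (s : ℝ) ^ d ≠ 0 := pow_ne_zero _ hs.ne'
  simp only [delta1M, hg, Finset.sum_div, mul_pow]
  refine Finset.sum_congr rfl fun k _ => ?_
  rw [div_div, mul_comm]

lemma wbound {M h : ℝ} (hh : 0 < h) (hM : ZygMBound d μ M) (j : ℕ) (c : ES d) :
    |delta1M d μ c (h / 2 ^ j)
        - (∑ k : Fin d → Fin 2, delta1M d μ (hc2 c h k) (h / 2 ^ j)) / 2 ^ d|
      ≤ (2 * j + 1) * M := by
  have hM0 : 0 ≤ M := le_trans (abs_nonneg _) (hM c h hh)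
  induction j generalizing c with
  | zero =>
      simp only [pow_zero, div_one]
      rw [← doubling μ c hh]
      have := hM c h hh
      simpa [delta2M] using this
  | succ j ih =>
      have hσ : (0:ℝ) < h / 2 ^ (j+1) := by positivity
      have hkey : h / 2 ^ j = 2 * (h / 2 ^ (j+1)) := by ring
      set σ := h / 2 ^ (j+1) with hσdef
      have hsplit : ∀ z : ES d, delta1M d μ z σ = delta2M d μ z σ + delta1M d μ z (2*σ) := by
        intro z; simp [delta2M]
      have expand :
          delta1M d μ c σ - (∑ k : Fin d → Fin 2, delta1M d μ (hc2 c h k) σ) / 2 ^ d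
          = (delta2M d μ c σ - (∑ k : Fin d → Fin 2, delta2M d μ (hc2 c h k) σ) / 2 ^ d)
            + (delta1M d μ c (h/2^j)
               - (∑ k : Fin d → Fin 2, delta1M d μ (hc2 c h k) (h/2^j)) / 2 ^ d) := by
        rw [hkey]
        simp only [hsplit, Finset.sum_add_distrib]
        ring
      rw [expand]
      have b1 : |delta2M d μ c σ - (∑ k : Fin d → Fin 2, delta2M d μ (hc2 c h k) σ) / 2 ^ d|
          ≤ 2 * M := by
        have h1 : |delta2M d μ c σ| ≤ M := hM c σ hσ
        have h2 : |∑ k : Fin d → Fin 2, delta2M d μ (hc2 c h k) σ| ≤ (2^d : ℝ) * M := by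
          calc |∑ k : Fin d → Fin 2, delta2M d μ (hc2 c h k) σ|
              ≤ ∑ k : Fin d → Fin 2, |delta2M d μ (hc2 c h k) σ| := Finset.abs_sum_le_sum_abs _ _
            _ ≤ ∑ _k : Fin d → Fin 2, M := Finset.sum_le_sum fun k _ => hM _ σ hσ
            _ = (2^d : ℝ) * M := by
                rw [Finset.sum_const, nsmul_eq_mul]
                simp [Fintype.card_fun]
        have h2' : |(∑ k : Fin d → Fin 2, delta2M d μ (hc2 c h k) σ) / 2 ^ d| ≤ M := by
          rw [abs_div, abs_of_pos (by positivity : (0:ℝ) < (2:ℝ)^d)]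
          rw [div_le_iff₀ (by positivity)]
          calc |∑ k : Fin d → Fin 2, delta2M d μ (hc2 c h k) σ| ≤ (2^d : ℝ) * M := h2
            _ = M * 2 ^ d := by ring
        calc |_| ≤ |delta2M d μ c σ| + |(∑ k : Fin d → Fin 2, delta2M d μ (hc2 c h k) σ) / 2 ^ d| :=
              abs_sub _ _
          _ ≤ M + M := add_le_add h1 h2'
          _ = 2 * M := by ring
      have hfin : |delta2M d μ c σ - (∑ k : Fin d → Fin 2, delta2M d μ (hc2 c h k) σ) / 2 ^ d
            + (delta1M d μ c (h/2^j)
               - (∑ k : Fin d → Fin 2, delta1M d μ (hc2 c h k) (h/2^j)) / 2 ^ d)|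
          ≤ 2 * M + (2 * j + 1) * M :=
        le_trans (abs_add_le _ _) (add_le_add b1 (ih c))
      have hco : ((2:ℝ) * (↑(j+1)) + 1) * M = 2 * M + (2 * ↑j + 1) * M := by push_cast; ring
      rw [hco]
      exact hfin

lemma card_fiber {d : ℕ} (N : ℕ) (i : Fin d) (P : (Fin d → Fin N) → Prop)
    [DecidablePred P] (a : Fin N) (hP : ∀ k, P k ↔ k i = a) :
    (Finset.univ.filter P).card = N ^ (d - 1) := by
  classical
  have e : {k : Fin d → Fin N // k i = a} ≃ ({j : Fin d // j ≠ i} → Fin N) := by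
    refine ⟨fun k j => k.1 j.1, fun g => ⟨fun j => if hj : j = i then a else g ⟨j, hj⟩, by simp⟩,
      ?_, ?_⟩
    · rintro ⟨k, hk⟩
      ext j
      by_cases hj : j = i
      · subst hj; simp [hk]
      · simp [hj]
    · intro g
      funext j
      simp [j.2]
  have h1 : (Finset.univ.filter P).card = Fintype.card {k : Fin d → Fin N // k i = a} := by
    rw [Fintype.card_subtype]
    congr 1
    apply Finset.filter_congr
    intro k _
    simp [hP k]
  rw [h1, Fintype.card_congr e, Fintype.card_fun]
  have hcard : Fintype.card {j : Fin d // j ≠ i} = d - 1 := by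
    have h := Fintype.card_subtype_compl (fun j : Fin d => j = i)
    simpa [Fintype.card_subtype_eq] using h
  rw [hcard]
  simp

lemma sum_shift {d N : ℕ} (hN : 1 ≤ N) (i : Fin d) (W : (Fin d → ℕ) → ℝ) :
    (∑ k : Fin d → Fin N, W (fun i' => (k i' : ℕ) + if i' = i then 1 else 0))
      - ∑ k : Fin d → Fin N, W (fun i' => (k i' : ℕ))
    = (∑ k ∈ Finset.univ.filter (fun k : Fin d → Fin N => (k i : ℕ) = N - 1),
        W (fun i' => (k i' : ℕ) + if i' = i then 1 else 0))
      - ∑ k ∈ Finset.univ.filter (fun k : Fin d → Fin N => (k i : ℕ) = 0),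
        W (fun i' => (k i' : ℕ)) := by
  classical
  have hsplit1 := (Finset.sum_filter_add_sum_filter_not Finset.univ
    (fun k : Fin d → Fin N => (k i : ℕ) = N - 1)
    (fun k => W (fun i' => (k i' : ℕ) + if i' = i then 1 else 0))).symm
  have hsplit2 := (Finset.sum_filter_add_sum_filter_not Finset.univ
    (fun k : Fin d → Fin N => (k i : ℕ) = 0)
    (fun k => W (fun i' => (k i' : ℕ)))).symm
  have hmid :
      (∑ k ∈ Finset.univ.filter (fun k : Fin d → Fin N => ¬ (k i : ℕ) = N - 1),
        W (fun i' => (k i' : ℕ) + if i' = i then 1 else 0))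
      = ∑ k ∈ Finset.univ.filter (fun k : Fin d → Fin N => ¬ (k i : ℕ) = 0),
        W (fun i' => (k i' : ℕ)) := by
    refine Finset.sum_bij'
      (fun (k : Fin d → Fin N) (hk : k ∈ Finset.univ.filter
          (fun k : Fin d → Fin N => ¬ (k i : ℕ) = N - 1)) =>
        Function.update k i (⟨(k i : ℕ) + 1, by
          have h1 : (k i : ℕ) < N := (k i).2
          simp only [Finset.mem_filter, Finset.mem_univ, true_and] at hk
          omega⟩ : Fin N))
      (fun (k : Fin d → Fin N) (_ : k ∈ Finset.univ.filter
          (fun k : Fin d → Fin N => ¬ (k i : ℕ) = 0)) =>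
        Function.update k i (⟨(k i : ℕ) - 1, by
          have h1 : (k i : ℕ) < N := (k i).2
          omega⟩ : Fin N))
      ?_ ?_ ?_ ?_ ?_
    · -- hi : image lands in target filter
      intro k hk
      simp only [Finset.mem_filter, Finset.mem_univ, true_and] at hk ⊢
      simp [Function.update_self]
    · -- hj
      intro k hk
      simp only [Finset.mem_filter, Finset.mem_univ, true_and] at hk ⊢
      have h1 : (k i : ℕ) < N := (k i).2
      simp only [Function.update_self]
      omega
    · -- left_inv : j (i k) = k
      intro k hk
      simp only [Finset.mem_filter, Finset.mem_univ, true_and] at hk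
      funext j
      by_cases hj : j = i
      · subst hj
        simp only [Function.update_self]
        apply Fin.ext
        simp
      · simp [Function.update_of_ne hj]
    · -- right_inv : i (j k) = k
      intro k hk
      simp only [Finset.mem_filter, Finset.mem_univ, true_and] at hk
      have h1 : (k i : ℕ) < N := (k i).2
      funext j
      by_cases hj : j = i
      · subst hj
        simp only [Function.update_self]
        apply Fin.ext
        simp
        omega
      · simp [Function.update_of_ne hj]
    · -- values agree
      intro k hk
      simp only [Finset.mem_filter, Finset.mem_univ, true_and] at hk
      congr 1
      funext i'
      by_cases hj : i' = i
      · subst hj; simp [Function.update_self]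
      · simp [Function.update_of_ne hj, hj]
  rw [hsplit1, hsplit2]
  linarith [hmid]


lemma mv_gc {d : ℕ} (y : ES d) (i : Fin d) {σ h : ℝ} (k : Fin d → ℕ) :
    gc (mv y i σ) h σ k = gc y h σ (fun i' => k i' + if i' = i then 1 else 0) := by
  ext i'
  by_cases hi' : i' = i <;> simp [gc, mv, hi'] <;> push_cast <;> ring

lemma gc_hc2 {d : ℕ} (y : ES d) (k₂ : Fin d → Fin 2) {σ h : ℝ} (m : Fin d → ℕ) :
    gc (hc2 y h k₂) h σ m = hc2 (gc y h σ m) h k₂ := by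
  ext i'; simp [gc, hc2]; ring

lemma hc2_mv {d : ℕ} (y : ES d) (i : Fin d) (k₂ : Fin d → Fin 2) {σ h : ℝ} :
    hc2 (mv y i σ) h k₂ = mv (hc2 y h k₂) i σ := by
  ext i'
  by_cases hi' : i' = i <;> simp [hc2, mv, hi'] <;> ring

lemma step {d : ℕ} (hd : 1 ≤ d) (μ : SignedMeasure (ES d)) {M h : ℝ} (hh : 0 < h)
    (hM : ZygMBound d μ M) (j : ℕ) (y : ES d) (i : Fin d) :
    |delta2M d μ (mv y i (h / 2 ^ j)) h - delta2M d μ y h|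
      ≤ 2 / 2 ^ j * ((2 * (j:ℝ) + 1) * M) := by
  have hM0 : 0 ≤ M := le_trans (abs_nonneg _) (hM y h hh)
  obtain ⟨σ, hσdef⟩ : ∃ σ : ℝ, σ = h / 2 ^ j := ⟨_, rfl⟩
  rw [← hσdef]
  have hσ : 0 < σ := by rw [hσdef]; positivity
  set N : ℕ := 2 ^ j with hNdef
  have hN1 : 1 ≤ N := Nat.one_le_two_pow
  have hNR : (N : ℝ) = 2 ^ j := by rw [hNdef]; push_cast; ring
  have hNσ : (N : ℝ) * σ = h := by rw [hNR, hσdef]; field_simp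
  have hNR0 : (0:ℝ) < (N:ℝ) := by rw [hNR]; positivity
  set W : (Fin d → ℕ) → ℝ := fun m => μ (ecube d (gc y h σ m) σ) with hW
  set Θ : (Fin d → ℕ) → ℝ := fun m =>
    W m - (∑ k₂ : Fin d → Fin 2, (μ (ecube d (hc2 (gc y h σ m) h k₂) σ) : ℝ)) / 2 ^ d with hΘ
  have Ex1 : ∀ c : ES d, (μ (ecube d c h) : ℝ)
      = ∑ k : Fin d → Fin N, (μ (ecube d (gc c h σ (fun i' => (k i' : ℕ))) σ) : ℝ) := by
    intro c
    have hg := grid_meas μ c hσ N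
    rwa [hNσ] at hg
  have Ex2 : ∀ c : ES d, (μ (ecube d c (2 * h)) : ℝ)
      = ∑ k₂ : Fin d → Fin 2, (μ (ecube d (hc2 c h k₂) h) : ℝ) := by
    intro c
    have h2 : ((2:ℕ) : ℝ) * h = 2 * h := by norm_num
    have hg := grid_meas μ c hh 2
    rw [h2] at hg
    have hcent : ∀ k : Fin d → Fin 2, gc c (2*h) h (fun i' => (k i' : ℕ)) = hc2 c h k := by
      intro k; ext i'; simp [gc, hc2]; ring
    simpa [hcent] using hg
  have E1 : ∀ c : ES d, (μ (ecube d (mv c i σ) h) : ℝ) - μ (ecube d c h)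
      = (∑ k ∈ Finset.univ.filter (fun k : Fin d → Fin N => (k i : ℕ) = N - 1),
          (μ (ecube d (gc c h σ (fun i' => (k i' : ℕ) + if i' = i then 1 else 0)) σ) : ℝ))
        - ∑ k ∈ Finset.univ.filter (fun k : Fin d → Fin N => (k i : ℕ) = 0),
          (μ (ecube d (gc c h σ (fun i' => (k i' : ℕ))) σ) : ℝ) := by
    intro c
    rw [Ex1 (mv c i σ), Ex1 c]
    have hIdA : ∀ k : Fin d → Fin N, gc (mv c i σ) h σ (fun i' => (k i' : ℕ))
        = gc c h σ (fun i' => (k i' : ℕ) + if i' = i then 1 else 0) := fun k => mv_gc c i _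
    simp only [hIdA]
    exact sum_shift hN1 i (fun m => (μ (ecube d (gc c h σ m) σ) : ℝ))
  have key : delta2M d μ (mv y i σ) h - delta2M d μ y h
      = ((∑ k ∈ Finset.univ.filter (fun k : Fin d → Fin N => (k i : ℕ) = N - 1),
            Θ (fun i' => (k i' : ℕ) + if i' = i then 1 else 0))
        - ∑ k ∈ Finset.univ.filter (fun k : Fin d → Fin N => (k i : ℕ) = 0),
            Θ (fun i' => (k i' : ℕ))) / h ^ d := by
    have E2 : (μ (ecube d (mv y i σ) (2*h)) : ℝ) - μ (ecube d y (2*h))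
        = ∑ k₂ : Fin d → Fin 2,
            (((∑ k ∈ Finset.univ.filter (fun k : Fin d → Fin N => (k i : ℕ) = N - 1),
              (μ (ecube d (hc2 (gc y h σ (fun i' => (k i' : ℕ) + if i' = i then 1 else 0)) h k₂) σ) : ℝ))
            - ∑ k ∈ Finset.univ.filter (fun k : Fin d → Fin N => (k i : ℕ) = 0),
              (μ (ecube d (hc2 (gc y h σ (fun i' => (k i' : ℕ))) h k₂) σ) : ℝ))) := by
      rw [Ex2 (mv y i σ), Ex2 y, ← Finset.sum_sub_distrib]
      refine Finset.sum_congr rfl fun k₂ _ => ?_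
      rw [hc2_mv y i k₂, E1 (hc2 y h k₂)]
      simp only [gc_hc2]
    have hhd : (h:ℝ) ^ d ≠ 0 := pow_ne_zero _ hh.ne'
    have h2d : ((2:ℝ) ^ d) ≠ 0 := by positivity
    have expand2 : delta2M d μ (mv y i σ) h - delta2M d μ y h
        = (((μ (ecube d (mv y i σ) h) : ℝ) - μ (ecube d y h))
          - ((μ (ecube d (mv y i σ) (2*h)) : ℝ) - μ (ecube d y (2*h))) / 2 ^ d) / h ^ d := by
      simp only [delta2M, delta1M, mul_pow]
      field_simp
      ring
    rw [expand2, E1 y, E2]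
    congr 1
    have hcomm1 : (∑ k₂ : Fin d → Fin 2,
        ∑ k ∈ Finset.univ.filter (fun k : Fin d → Fin N => (k i : ℕ) = N - 1),
          (μ (ecube d (hc2 (gc y h σ (fun i' => (k i' : ℕ) + if i' = i then 1 else 0)) h k₂) σ) : ℝ))
        = ∑ k ∈ Finset.univ.filter (fun k : Fin d → Fin N => (k i : ℕ) = N - 1),
          ∑ k₂ : Fin d → Fin 2,
          (μ (ecube d (hc2 (gc y h σ (fun i' => (k i' : ℕ) + if i' = i then 1 else 0)) h k₂) σ) : ℝ) :=
      Finset.sum_comm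
    have hcomm2 : (∑ k₂ : Fin d → Fin 2,
        ∑ k ∈ Finset.univ.filter (fun k : Fin d → Fin N => (k i : ℕ) = 0),
          (μ (ecube d (hc2 (gc y h σ (fun i' => (k i' : ℕ))) h k₂) σ) : ℝ))
        = ∑ k ∈ Finset.univ.filter (fun k : Fin d → Fin N => (k i : ℕ) = 0),
          ∑ k₂ : Fin d → Fin 2,
          (μ (ecube d (hc2 (gc y h σ (fun i' => (k i' : ℕ))) h k₂) σ) : ℝ) :=
      Finset.sum_comm
    simp only [hΘ, hW, Finset.sum_sub_distrib, Finset.sum_div]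
    rw [hcomm1, hcomm2]
    simp only [← Finset.sum_div]
    ring
  have Θbound : ∀ m : Fin d → ℕ, |Θ m| ≤ σ ^ d * ((2 * (j:ℝ) + 1) * M) := by
    intro m
    have hb := wbound μ hh hM j (gc y h σ m)
    rw [← hσdef] at hb
    have hσd : (0:ℝ) < σ ^ d := by positivity
    have gen : ∀ A B : ℝ, σ ^ d * (A / σ ^ d - B / σ ^ d / 2 ^ d) = A - B / 2 ^ d := by
      intro A B
      have h2d : ((2:ℝ) ^ d) ≠ 0 := by positivity
      field_simp
    have hΘm : Θ m = σ ^ d * (delta1M d μ (gc y h σ m) σ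
        - (∑ k₂ : Fin d → Fin 2, delta1M d μ (hc2 (gc y h σ m) h k₂) σ) / 2 ^ d) := by
      simp only [hΘ, hW, delta1M]
      rw [← Finset.sum_div, gen]
    rw [hΘm, abs_mul, abs_of_pos hσd]
    exact mul_le_mul_of_nonneg_left hb hσd.le
  have hlt1 : N - 1 < N := by omega
  have hlt0 : 0 < N := by omega
  have topcard : (Finset.univ.filter (fun k : Fin d → Fin N => (k i : ℕ) = N - 1)).card
      = N ^ (d-1) :=
    card_fiber N i _ (⟨N-1, hlt1⟩ : Fin N) (fun k => by simp [Fin.ext_iff])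
  have botcard : (Finset.univ.filter (fun k : Fin d → Fin N => (k i : ℕ) = 0)).card
      = N ^ (d-1) :=
    card_fiber N i _ (⟨0, hlt0⟩ : Fin N) (fun k => (@Fin.ext_iff N (k i) ⟨0, hlt0⟩).symm)
  have faceBound : ∀ (S : Finset (Fin d → Fin N)) (g : (Fin d → Fin N) → (Fin d → ℕ)),
      |∑ k ∈ S, Θ (g k)| ≤ (S.card : ℝ) * (σ ^ d * ((2*(j:ℝ)+1)*M)) := by
    intro S g
    calc |∑ k ∈ S, Θ (g k)| ≤ ∑ k ∈ S, |Θ (g k)| := Finset.abs_sum_le_sum_abs _ _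
      _ ≤ ∑ _k ∈ S, σ ^ d * ((2*(j:ℝ)+1)*M) := Finset.sum_le_sum fun k _ => Θbound _
      _ = (S.card : ℝ) * (σ ^ d * ((2*(j:ℝ)+1)*M)) := by rw [Finset.sum_const, nsmul_eq_mul]
  rw [key, abs_div, abs_of_pos (pow_pos hh d)]
  have hnum : |(∑ k ∈ Finset.univ.filter (fun k : Fin d → Fin N => (k i : ℕ) = N - 1),
            Θ (fun i' => (k i' : ℕ) + if i' = i then 1 else 0))
        - ∑ k ∈ Finset.univ.filter (fun k : Fin d → Fin N => (k i : ℕ) = 0),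
            Θ (fun i' => (k i' : ℕ))|
      ≤ 2 * ((N:ℝ) ^ (d-1) * (σ ^ d * ((2*(j:ℝ)+1)*M))) := by
    have h1 := faceBound (Finset.univ.filter (fun k : Fin d → Fin N => (k i : ℕ) = N - 1))
      (fun k i' => (k i' : ℕ) + if i' = i then 1 else 0)
    have h2 := faceBound (Finset.univ.filter (fun k : Fin d → Fin N => (k i : ℕ) = 0))
      (fun k i' => (k i' : ℕ))
    rw [topcard] at h1
    rw [botcard] at h2
    push_cast at h1 h2
    refine le_trans (abs_sub _ _) ?_
    push_cast
    linarith
  have hde : d = (d - 1) + 1 := (Nat.sub_add_cancel hd).symm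
  have hNd : (N:ℝ)^(d-1) * (N:ℝ) = (N:ℝ)^d := by rw [← pow_succ, ← hde]
  have hhd_eq : h ^ d = (N:ℝ)^(d-1) * N * σ^d := by
    rw [← hNσ, mul_pow, ← hNd]
  calc _ ≤ (2 * ((N:ℝ) ^ (d-1) * (σ ^ d * ((2*(j:ℝ)+1)*M)))) / h ^ d := by
        apply div_le_div_of_nonneg_right hnum (pow_pos hh d).le
    _ = 2 / (N:ℝ) * ((2*(j:ℝ)+1)*M) := by
        rw [hhd_eq]
        have hN0 : ((N:ℝ)) ≠ 0 := hNR0.ne'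
        have hNd0 : ((N:ℝ))^(d-1) ≠ 0 := pow_ne_zero _ hN0
        field_simp
    _ = 2 / 2 ^ j * ((2*(j:ℝ)+1)*M) := by rw [hNR]

lemma mv_zero {d : ℕ} (y : ES d) (i : Fin d) : mv y i 0 = y := by
  ext i'; by_cases hi' : i' = i <;> simp [mv, hi']

lemma mv_mv {d : ℕ} (y : ES d) (i : Fin d) (a b : ℝ) :
    mv (mv y i a) i b = mv y i (a + b) := by
  ext i'; by_cases hi' : i' = i <;> simp [mv, hi'] <;> ring

lemma log2_two_mul {m : ℕ} (hm : 1 ≤ m) : Nat.log 2 (2 * m) = Nat.log 2 m + 1 := by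
  have h1 : 2 ^ Nat.log 2 m ≤ m := Nat.pow_log_le_self 2 (by omega)
  have h2 : m < 2 ^ (Nat.log 2 m + 1) := Nat.lt_pow_succ_log_self (by norm_num) m
  refine Nat.log_eq_of_pow_le_of_lt_pow ?_ ?_
  · rw [pow_succ]; omega
  · rw [pow_succ]; omega

lemma log2_two_mul_add_one {m : ℕ} (hm : 1 ≤ m) :
    Nat.log 2 (2 * m + 1) = Nat.log 2 m + 1 := by
  have h1 : 2 ^ Nat.log 2 m ≤ m := Nat.pow_log_le_self 2 (by omega)
  have h2 : m < 2 ^ (Nat.log 2 m + 1) := Nat.lt_pow_succ_log_self (by norm_num) m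
  refine Nat.log_eq_of_pow_le_of_lt_pow ?_ ?_
  · rw [pow_succ]; omega
  · rw [pow_succ, pow_succ]; omega

lemma stepterm_nonneg (j' : ℕ) : (0:ℝ) ≤ 2 / 2 ^ j' * (2 * (j':ℝ) + 1) := by positivity

/-- The multi-step dyadic estimate, by strong recursion on the binary expansion. -/
lemma dyadic {d : ℕ} (hd : 1 ≤ d) (μ : SignedMeasure (ES d)) {M h : ℝ} (hh : 0 < h)
    (hM : ZygMBound d μ M) :
    ∀ (J m : ℕ), 1 ≤ m → m < 2 ^ J → ∀ (y : ES d) (i : Fin d),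
    |delta2M d μ (mv y i ((m : ℝ) * (h / 2 ^ J))) h - delta2M d μ y h|
      ≤ M * ∑ j' ∈ Finset.Icc (J - Nat.log 2 m) J, 2 / 2 ^ j' * (2 * (j':ℝ) + 1) := by
  have hM0 : 0 ≤ M := le_trans (abs_nonneg _) (hM 0 h hh)
  intro J
  induction J with
  | zero => intro m h1 h2 y i; omega
  | succ J ih =>
    intro m h1 h2 y i
    rcases Nat.even_or_odd m with ⟨m', hm'⟩ | ⟨m', hm'⟩
    · -- even : m = m' + m'
      have hm : m = 2 * m' := by omega
      have hm'1 : 1 ≤ m' := by omega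
      have hm'2 : m' < 2 ^ J := by rw [hm] at h2; rw [pow_succ] at h2; omega
      have hshift : (m : ℝ) * (h / 2 ^ (J+1)) = (m' : ℝ) * (h / 2 ^ J) := by
        rw [hm]; push_cast; rw [pow_succ]; field_simp
      rw [hshift]
      have hlog : Nat.log 2 m = Nat.log 2 m' + 1 := by rw [hm]; exact log2_two_mul hm'1
      have hsub : J + 1 - Nat.log 2 m = J - Nat.log 2 m' := by rw [hlog]; omega
      rw [hsub]
      refine le_trans (ih m' hm'1 hm'2 y i) (mul_le_mul_of_nonneg_left ?_ hM0)
      refine Finset.sum_le_sum_of_subset_of_nonneg ?_ (fun j' _ _ => stepterm_nonneg j')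
      intro a ha
      simp only [Finset.mem_Icc] at ha ⊢
      omega
    · -- odd : m = 2 m' + 1
      have hm : m = 2 * m' + 1 := hm'
      by_cases hm'0 : m' = 0
      · -- m = 1 : single step at level J+1
        subst hm'0
        have hm1 : m = 1 := by omega
        subst hm1
        have hstep := step hd μ hh hM (J+1) y i
        have hcast : ((1:ℕ) : ℝ) * (h / 2 ^ (J+1)) = h / 2 ^ (J+1) := by push_cast; ring
        rw [hcast]
        have hlog : Nat.log 2 1 = 0 := Nat.log_one_right 2
        rw [hlog, Nat.sub_zero, Finset.Icc_self, Finset.sum_singleton]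
        refine le_trans hstep (le_of_eq ?_)
        push_cast
        ring
      · -- m = 2 m' + 1, m' ≥ 1
        have hm'1 : 1 ≤ m' := by omega
        have hm'2 : m' < 2 ^ J := by rw [hm] at h2; rw [pow_succ] at h2; omega
        have hlog : Nat.log 2 m = Nat.log 2 m' + 1 := by rw [hm]; exact log2_two_mul_add_one hm'1
        set a : ℝ := (m' : ℝ) * (h / 2 ^ J) with ha
        have hsum : (m : ℝ) * (h / 2 ^ (J+1)) = a + h / 2 ^ (J+1) := by
          rw [ha, hm]; push_cast; rw [pow_succ]; field_simp
        have hdecomp : mv y i ((m : ℝ) * (h / 2 ^ (J+1)))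
            = mv (mv y i a) i (h / 2 ^ (J+1)) := by
          rw [mv_mv, hsum]
        have h1' := step hd μ hh hM (J+1) (mv y i a) i
        have h2' := ih m' hm'1 hm'2 y i
        rw [← ha] at h2'
        have htri : |delta2M d μ (mv y i ((m : ℝ) * (h / 2 ^ (J+1)))) h - delta2M d μ y h|
            ≤ |delta2M d μ (mv (mv y i a) i (h / 2 ^ (J+1))) h - delta2M d μ (mv y i a) h|
              + |delta2M d μ (mv y i a) h - delta2M d μ y h| := by
          rw [hdecomp]
          exact abs_sub_le _ _ _
        have hsub : J + 1 - Nat.log 2 m = J - Nat.log 2 m' := by rw [hlog]; omega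
        have hIccsplit : Finset.Icc (J - Nat.log 2 m') (J + 1)
            = insert (J+1) (Finset.Icc (J - Nat.log 2 m') J) := by
          rw [← Finset.insert_Icc_right_eq_Icc_add_one]
          omega
        rw [hsub, hIccsplit]
        rw [Finset.sum_insert (by simp)]
        rw [mul_add]
        refine le_trans htri (add_le_add (le_trans h1' (le_of_eq ?_)) h2')
        push_cast
        ring

lemma geom_aux : ∀ (J n : ℕ), n ≤ J + 1 →
    (∑ j' ∈ Finset.Icc n J, 2 / 2 ^ j' * (2 * (j':ℝ) + 1))
      + 2 / 2 ^ (J+1) * (4 * ((J:ℝ)+1) + 6) ≤ 2 / 2 ^ n * (4 * (n:ℝ) + 6) := by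
  intro J
  induction J with
  | zero =>
    intro n hn
    interval_cases n
    · norm_num [Finset.Icc_self, Finset.sum_singleton]
    · rw [show Finset.Icc 1 0 = ∅ from Finset.Icc_eq_empty (by omega)]
      norm_num
  | succ J ihJ =>
    intro n hn
    by_cases hn2 : n = J + 2
    · subst hn2
      rw [show Finset.Icc (J+2) (J+1) = ∅ from Finset.Icc_eq_empty (by omega)]
      rw [Finset.sum_empty, zero_add]
      push_cast
      ring_nf
      exact le_rfl

    · have hn' : n ≤ J + 1 := by omega
      rw [show Finset.Icc n (J+1) = insert (J+1) (Finset.Icc n J) from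
        (Finset.insert_Icc_right_eq_Icc_add_one hn').symm, Finset.sum_insert (by simp)]
      have h2a : (2:ℝ)^(J+1+1) = 2^(J+1) * 2 := pow_succ 2 (J+1)
      have hkey : (2:ℝ)/2^(J+1) * (2*((J:ℝ)+1)+1) + 2/2^(J+1+1)*(4*(((J:ℝ)+1)+1)+6)
          = 2/2^(J+1)*(4*((J:ℝ)+1)+6) := by
        rw [h2a]
        have hp : (0:ℝ) < 2^(J+1) := by positivity
        field_simp
        ring
      have hih := ihJ n hn'
      push_cast at hkey hih ⊢
      linarith

lemma geom_bound {n J : ℕ} (hn : n ≤ J) :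
    (∑ j' ∈ Finset.Icc n J, 2 / 2 ^ j' * (2 * (j':ℝ) + 1)) ≤ 2 / 2 ^ n * (4 * (n:ℝ) + 6) := by
  have h := geom_aux J n (by omega)
  have hpos : (0:ℝ) ≤ 2 / 2 ^ (J+1) * (4 * ((J:ℝ)+1) + 6) := by positivity
  linarith

lemma rlog_mono {h r₁ r₂ : ℝ} (hh : 0 < h) (h1 : 0 < r₁) (h12 : r₁ ≤ r₂) :
    r₁ * Real.log (h / r₁ + 1) ≤ r₂ * Real.log (h / r₂ + 1) := by
  have h2 : 0 < r₂ := lt_of_lt_of_le h1 h12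
  have ht1 : 1 ≤ r₂ / r₁ := (one_le_div h1).2 h12
  have hq : 0 ≤ h / r₂ := by positivity
  have hber : 1 + (r₂/r₁) * (h / r₂) ≤ (1 + h / r₂) ^ (r₂/r₁ : ℝ) :=
    one_add_mul_self_le_rpow_one_add (by linarith) ht1
  have hkey : h / r₁ = (r₂/r₁) * (h/r₂) := by
    field_simp
  have hlog : Real.log (1 + h/r₁) ≤ Real.log ((1 + h/r₂) ^ (r₂/r₁ : ℝ)) := by
    apply Real.log_le_log (by positivity)
    rw [hkey]; exact hber
  rw [Real.log_rpow (by positivity)] at hlog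
  have hmul := mul_le_mul_of_nonneg_left hlog h1.le
  calc r₁ * Real.log (h/r₁ + 1) = r₁ * Real.log (1 + h/r₁) := by rw [add_comm]
    _ ≤ r₁ * ((r₂/r₁) * Real.log (1 + h/r₂)) := hmul
    _ = r₂ * Real.log (h/r₂ + 1) := by rw [add_comm (h/r₂) 1]; field_simp

lemma tendsto_cube {d : ℕ} (μ : SignedMeasure (ES d)) (h' : ℝ) (y : ES d) (i : Fin d)
    {s : ℝ} {sJ : ℕ → ℝ} (hle : ∀ J, sJ J ≤ s)
    (hlim : Filter.Tendsto sJ Filter.atTop (nhds s)) :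
    Filter.Tendsto (fun J => (μ (ecube d (mv y i (sJ J)) h') : ℝ)) Filter.atTop
      (nhds (μ (ecube d (mv y i s) h'))) := by
  have hmem : ∀ x : ES d, ∀ᶠ J in Filter.atTop,
      (x ∈ ecube d (mv y i (sJ J)) h' ↔ x ∈ ecube d (mv y i s) h') := by
    intro x
    by_cases hB : x i < y i + s + h'/2
    · by_cases hA : y i + s - h'/2 ≤ x i
      · have hev : ∀ᶠ J in Filter.atTop, x i - y i - h'/2 < sJ J :=
          hlim.eventually (eventually_gt_nhds (by linarith))
        filter_upwards [hev] with J hJ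
        constructor
        · intro hx i'
          have hxi := hx i'
          by_cases hi' : i' = i
          · subst hi'
            simp only [ecube, Set.mem_setOf_eq, mv, pt_apply, eq_self_iff_true, if_true] at hxi ⊢
            constructor
            · linarith
            · linarith
          · simpa [mv, hi'] using hxi
        · intro hx i'
          have hxi := hx i'
          by_cases hi' : i' = i
          · subst hi'
            simp only [ecube, Set.mem_setOf_eq, mv, pt_apply, eq_self_iff_true, if_true] at hxi ⊢
            have := hle J
            constructor
            · linarith
            · linarith
          · simpa [mv, hi'] using hxi
      · push_neg at hA
        have hev : ∀ᶠ J in Filter.atTop, x i - y i + h'/2 < sJ J :=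
          hlim.eventually (eventually_gt_nhds (by linarith))
        filter_upwards [hev] with J hJ
        constructor
        · intro hx
          exfalso
          have hxi := hx i
          simp only [mv, pt_apply, eq_self_iff_true, if_true] at hxi
          linarith [hxi.1]
        · intro hx
          exfalso
          have hxi := hx i
          simp only [mv, pt_apply, eq_self_iff_true, if_true] at hxi
          linarith [hxi.1]
    · push_neg at hB
      refine Filter.Eventually.of_forall (fun J => ?_)
      constructor
      · intro hx
        exfalso
        have hxi := hx i
        simp only [mv, pt_apply, eq_self_iff_true, if_true] at hxi
        have := hle J
        linarith [hxi.2]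
      · intro hx
        exfalso
        have hxi := hx i
        simp only [mv, pt_apply, eq_self_iff_true, if_true] at hxi
        linarith [hxi.2]
  set P := μ.toJordanDecomposition.posPart with hP
  set Ng := μ.toJordanDecomposition.negPart with hNg
  have happ : ∀ A : Set (ES d), MeasurableSet A → (μ A : ℝ) = (P A).toReal - (Ng A).toReal := by
    intro A hA
    conv_lhs => rw [← μ.toSignedMeasure_toJordanDecomposition]
    rw [MeasureTheory.JordanDecomposition.toSignedMeasure, MeasureTheory.VectorMeasure.sub_apply,
      MeasureTheory.Measure.toSignedMeasure_apply_measurable hA,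
      MeasureTheory.Measure.toSignedMeasure_apply_measurable hA]
    rfl
  have hTP : Filter.Tendsto (fun J => (P (ecube d (mv y i (sJ J)) h')).toReal) Filter.atTop
      (nhds ((P (ecube d (mv y i s) h')).toReal)) := by
    have ht := MeasureTheory.tendsto_measure_of_tendsto_indicator_of_isFiniteMeasure
      (L := Filter.atTop) (As := fun J => ecube d (mv y i (sJ J)) h')
      (A := ecube d (mv y i s) h') P (fun J => measurable_ecube _ _ _) hmem
    exact (ENNReal.tendsto_toReal (measure_ne_top P _)).comp ht
  have hTN : Filter.Tendsto (fun J => (Ng (ecube d (mv y i (sJ J)) h')).toReal) Filter.atTop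
      (nhds ((Ng (ecube d (mv y i s) h')).toReal)) := by
    have ht := MeasureTheory.tendsto_measure_of_tendsto_indicator_of_isFiniteMeasure
      (L := Filter.atTop) (As := fun J => ecube d (mv y i (sJ J)) h')
      (A := ecube d (mv y i s) h') Ng (fun J => measurable_ecube _ _ _) hmem
    exact (ENNReal.tendsto_toReal (measure_ne_top Ng _)).comp ht
  have heq : ∀ J, (μ (ecube d (mv y i (sJ J)) h') : ℝ)
      = (P (ecube d (mv y i (sJ J)) h')).toReal - (Ng (ecube d (mv y i (sJ J)) h')).toReal :=
    fun J => happ _ (measurable_ecube _ _ _)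
  rw [happ _ (measurable_ecube _ _ _)]
  simp only [heq]
  exact hTP.sub hTN

lemma coord {d : ℕ} (hd : 1 ≤ d) (μ : SignedMeasure (ES d)) {M h : ℝ} (hh : 0 < h)
    (hM : ZygMBound d μ M) (y : ES d) (i : Fin d) {s : ℝ} (hs0 : 0 ≤ s) (hs : s < h / 2) :
    |delta2M d μ (mv y i s) h - delta2M d μ y h|
      ≤ 32 * M * (s / h * Real.log (h / s + 1)) := by
  have hM0 : 0 ≤ M := le_trans (abs_nonneg _) (hM 0 h hh)
  rcases eq_or_lt_of_le hs0 with hs0' | hs0'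
  · rw [← hs0', mv_zero]
    simp
  set m : ℕ → ℕ := fun J => ⌊s * 2 ^ J / h⌋₊ with hm
  set sj : ℕ → ℝ := fun J => (m J : ℝ) * (h / 2 ^ J) with hsj
  have hsjle : ∀ J, sj J ≤ s := by
    intro J
    have h0 : 0 ≤ s * 2 ^ J / h := by positivity
    have hfl := Nat.floor_le h0
    calc sj J = (⌊s * 2 ^ J / h⌋₊ : ℝ) * (h / 2 ^ J) := rfl
      _ ≤ (s * 2 ^ J / h) * (h / 2 ^ J) :=
          mul_le_mul_of_nonneg_right hfl (by positivity)
      _ = s := by field_simp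
  have hsjgt : ∀ J, s - h / 2 ^ J < sj J := by
    intro J
    have hfl := Nat.lt_floor_add_one (s * 2 ^ J / h)
    have h' : s * 2 ^ J / h * (h / 2 ^ J) < ((⌊s * 2 ^ J / h⌋₊ : ℝ) + 1) * (h / 2 ^ J) :=
      mul_lt_mul_of_pos_right hfl (by positivity)
    have hs' : s * 2 ^ J / h * (h / 2 ^ J) = s := by field_simp
    have hexp : ((⌊s * 2 ^ J / h⌋₊ : ℝ) + 1) * (h / 2 ^ J)
        = (⌊s * 2 ^ J / h⌋₊ : ℝ) * (h / 2 ^ J) + h / 2 ^ J := by ring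
    have hsjr : sj J = (⌊s * 2 ^ J / h⌋₊ : ℝ) * (h / 2 ^ J) := rfl
    linarith
  have hlimlow : Filter.Tendsto (fun J : ℕ => s - h / 2 ^ J) Filter.atTop (nhds s) := by
    have h0 : Filter.Tendsto (fun J : ℕ => h / 2 ^ J) Filter.atTop (nhds 0) := by
      have heq : (fun J : ℕ => h / 2 ^ J) = fun J : ℕ => h * (1/2 : ℝ) ^ J := by
        funext J
        rw [div_pow, one_pow]
        ring
      rw [heq]
      have := tendsto_pow_atTop_nhds_zero_of_lt_one (by norm_num : (0:ℝ) ≤ 1/2)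
        (by norm_num : (1/2:ℝ) < 1)
      simpa using this.const_mul h
    simpa using (tendsto_const_nhds (x := s)).sub h0
  have hlimsj : Filter.Tendsto sj Filter.atTop (nhds s) :=
    tendsto_of_tendsto_of_tendsto_of_le_of_le hlimlow tendsto_const_nhds
      (fun J => (hsjgt J).le) hsjle
  have hev1 : ∀ᶠ J in Filter.atTop, 1 ≤ m J := by
    have h2 : Filter.Tendsto (fun J : ℕ => (2:ℝ) ^ J) Filter.atTop Filter.atTop :=
      tendsto_pow_atTop_atTop_of_one_lt (by norm_num)
    filter_upwards [h2.eventually_ge_atTop (h / s)] with J hJ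
    have h1s : (1:ℝ) ≤ s * 2 ^ J / h := by
      rw [le_div_iff₀ hh]
      calc (1:ℝ) * h = h := one_mul h
        _ = (h / s) * s := by field_simp
        _ ≤ 2 ^ J * s := mul_le_mul_of_nonneg_right hJ hs0
        _ = s * 2 ^ J := mul_comm _ _
    exact Nat.le_floor (by exact_mod_cast h1s)
  have hbound : ∀ᶠ J in Filter.atTop,
      |delta2M d μ (mv y i (sj J)) h - delta2M d μ y h|
        ≤ 32 * M * (s / h * Real.log (h / s + 1)) := by
    filter_upwards [hev1] with J hm1
    have h2J : (0:ℝ) < 2 ^ J := by positivity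
    have hmlt : m J < 2 ^ J := by
      apply (Nat.floor_lt (by positivity)).2
      push_cast
      have hsh : s / h < 1 := (div_lt_one hh).2 (by linarith)
      have hrere : s * 2 ^ J / h = (s/h) * 2 ^ J := by ring
      rw [hrere]
      calc (s/h) * 2 ^ J < 1 * 2 ^ J := mul_lt_mul_of_pos_right hsh h2J
        _ = 2 ^ J := one_mul _
    have hmlt2 : 2 * (m J : ℝ) ≤ 2 ^ J := by
      have hfl : (m J : ℝ) ≤ s * 2 ^ J / h := Nat.floor_le (by positivity)
      have h2s : 2 * s ≤ h := by linarith
      have hh2 : s * 2 ^ J / h ≤ 2 ^ J / 2 := by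
        rw [div_le_div_iff₀ hh (by norm_num : (0:ℝ) < 2)]
        nlinarith [h2J.le]
      linarith
    have hdy := dyadic hd μ hh hM J (m J) hm1 hmlt y i
    have hsjJ : sj J = (m J : ℝ) * (h / 2 ^ J) := rfl
    rw [← hsjJ] at hdy
    set L := Nat.log 2 (m J) with hL
    have hLJ : L < J := Nat.log_lt_of_lt_pow (by omega) hmlt
    set n := J - L with hn
    have hn1 : 1 ≤ n := by omega
    have hnL : n + L = J := by omega
    have hgeo := geom_bound (n := n) (J := J) (by omega)
    have hpow : (2:ℝ)^n * 2^L = 2^J := by rw [← pow_add, hnL]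
    have hmge : (2:ℝ)^L ≤ (m J : ℝ) := by
      exact_mod_cast Nat.pow_log_le_self 2 (by omega)
    have hmlt' : (m J : ℝ) < 2^(L+1) := by
      exact_mod_cast Nat.lt_pow_succ_log_self (by norm_num) (m J)
    have hmpos : (0:ℝ) < (m J : ℝ) := by exact_mod_cast hm1
    have hsjpos : 0 < sj J := by rw [hsjJ]; positivity
    have hsjh : sj J / h = (m J : ℝ) / 2^J := by
      rw [hsjJ]; field_simp
    have hhsj : h / sj J = 2^J / (m J : ℝ) := by
      rw [hsjJ, eq_div_iff hmpos.ne']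
      field_simp
    have key1 : 2 / (2:ℝ)^n ≤ 2 * (sj J / h) := by
      rw [hsjh]
      have he : (2:ℝ)/2^n = 2 * 2^L / 2^J := by
        rw [← hpow]
        have e1 : (2:ℝ)^n ≠ 0 := by positivity
        have e2 : (2:ℝ)^L ≠ 0 := by positivity
        field_simp
      rw [he, div_le_iff₀ h2J]
      calc 2 * (2:ℝ)^L ≤ 2 * (m J : ℝ) := by linarith
        _ = 2 * ((m J : ℝ) / 2^J) * 2^J := by field_simp
    have h2le : (2:ℝ) ≤ h / sj J := by
      rw [hhsj, le_div_iff₀ hmpos]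
      linarith
    have hlog3 : (1:ℝ) ≤ Real.log (h / sj J + 1) := by
      have he3 : Real.exp 1 < 3 := lt_of_lt_of_le Real.exp_one_lt_d9 (by norm_num)
      have hl := (Real.lt_log_iff_exp_lt (by linarith : (0:ℝ) < h / sj J + 1)).2
        (by linarith : Real.exp 1 < h / sj J + 1)
      linarith
    have key2 : 4*(n:ℝ)+6 ≤ 16 * Real.log (h / sj J + 1) := by
      have h2n1 : (2:ℝ)^(n-1) ≤ h / sj J := by
        rw [hhsj, le_div_iff₀ hmpos]
        calc (2:ℝ)^(n-1) * (m J : ℝ) ≤ (2:ℝ)^(n-1) * 2^(L+1) :=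
              mul_le_mul_of_nonneg_left hmlt'.le (by positivity)
          _ = 2^(n-1+(L+1)) := (pow_add _ _ _).symm
          _ = 2^J := by congr 1; omega
      have hlog1 : (((n-1 : ℕ)) : ℝ) * Real.log 2 ≤ Real.log (h / sj J) := by
        have hll : Real.log ((2:ℝ)^(n-1)) ≤ Real.log (h / sj J) :=
          Real.log_le_log (by positivity) h2n1
        rwa [Real.log_pow] at hll
      have hc : (((n-1 : ℕ)) : ℝ) = (n:ℝ) - 1 := by
        push_cast [Nat.cast_sub hn1]
        ring
      rw [hc] at hlog1
      have hlog2 : Real.log (h / sj J) ≤ Real.log (h / sj J + 1) :=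
        Real.log_le_log (by positivity) (by linarith)
      have hlogtwo : (0.6931471803:ℝ) < Real.log 2 := Real.log_two_gt_d9
      have hnn : (0:ℝ) ≤ (n:ℝ) - 1 := by
        have : (1:ℝ) ≤ (n:ℝ) := by exact_mod_cast hn1
        linarith
      have hstep1 : ((n:ℝ)-1) * 0.6931471803 ≤ Real.log (h / sj J + 1) := by
        nlinarith
      linarith
    calc |delta2M d μ (mv y i (sj J)) h - delta2M d μ y h|
        ≤ M * ∑ j' ∈ Finset.Icc n J, 2 / 2 ^ j' * (2 * (j':ℝ) + 1) := hdy
      _ ≤ M * (2 / 2^n * (4*(n:ℝ)+6)) := mul_le_mul_of_nonneg_left hgeo hM0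
      _ ≤ M * ((2 * (sj J / h)) * (16 * Real.log (h / sj J + 1))) := by
          refine mul_le_mul_of_nonneg_left ?_ hM0
          refine mul_le_mul key1 key2 (by positivity) (by positivity)
      _ = 32 * M * (sj J / h * Real.log (h / sj J + 1)) := by ring
      _ ≤ 32 * M * (s / h * Real.log (h / s + 1)) := by
          have hmono := rlog_mono hh hsjpos (hsjle J)
          have h32M : (0:ℝ) ≤ 32 * M := by linarith
          refine mul_le_mul_of_nonneg_left ?_ h32M
          rw [div_mul_eq_mul_div, div_mul_eq_mul_div]
          exact div_le_div_of_nonneg_right hmono hh.le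
  have htendA : Filter.Tendsto (fun J => delta2M d μ (mv y i (sj J)) h) Filter.atTop
      (nhds (delta2M d μ (mv y i s) h)) := by
    have t1 := tendsto_cube μ h y i hsjle hlimsj
    have t2 := tendsto_cube μ (2*h) y i hsjle hlimsj
    have := (t1.div_const ((h:ℝ)^d)).sub (t2.div_const (((2*h):ℝ)^d))
    simpa only [delta2M, delta1M] using this
  have htends := (htendA.sub_const (delta2M d μ y h)).abs
  exact le_of_tendsto htends hbound

lemma coord_le_dist {d : ℕ} (x t : ES d) (i : Fin d) : |x i - t i| ≤ dist x t := by
  rw [EuclideanSpace.dist_eq]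
  have h1 : |x i - t i| = Real.sqrt ((x i - t i)^2) := (Real.sqrt_sq_eq_abs _).symm
  rw [h1]
  apply Real.sqrt_le_sqrt
  have h2 : dist (x i) (t i) ^ 2 = (x i - t i)^2 := by rw [Real.dist_eq, sq_abs]
  calc (x i - t i)^2 = dist (x i) (t i)^2 := h2.symm
    _ ≤ ∑ i', dist (x i') (t i')^2 :=
        Finset.single_le_sum (f := fun i' => dist (x i') (t i') ^ 2)
          (fun i' _ => sq_nonneg _) (Finset.mem_univ i)

lemma tele (f : ℕ → ℝ) : ∀ n, |f 0 - f n| ≤ ∑ k ∈ Finset.range n, |f k - f (k+1)| := by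
  intro n
  induction n with
  | zero => simp
  | succ n ih =>
    rw [Finset.sum_range_succ]
    calc |f 0 - f (n+1)| ≤ |f 0 - f n| + |f n - f (n+1)| := abs_sub_le _ _ _
      _ ≤ _ := add_le_add_left ih _

lemma zygMNorm_spec {d : ℕ} (μ : SignedMeasure (ES d)) (hμ : MemZygmundM d μ) :
    0 ≤ zygMNorm d μ ∧ ZygMBound d μ (zygMNorm d μ) := by
  obtain ⟨M, hM⟩ := hμ
  have hmem : max M 0 ∈ {M | 0 ≤ M ∧ ZygMBound d μ M} :=
    ⟨le_max_right _ _, fun x h hh => le_trans (hM x h hh) (le_max_left _ _)⟩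
  have hne : {M | 0 ≤ M ∧ ZygMBound d μ M}.Nonempty := ⟨_, hmem⟩
  constructor
  · exact le_csInf hne (fun b hb => hb.1)
  · intro x h hh
    exact le_csInf hne (fun b hb => hb.2 x h hh)

end ZygAux

open ZygAux

/-- Estimate (5.1): for a Zygmund measure `μ` on `ℝ^d`, `h > 0` and
`|x - t| < h/2`, `|Δ₂μ(x,h) - Δ₂μ(t,h)| ≤ C_d ‖μ‖_* (|x-t|/h) log(h/|x-t| + 1)`. -/
theorem stmt16 (d : ℕ) (hd : 1 ≤ d) : ∃ C > (0:ℝ),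
    ∀ μ : SignedMeasure (EuclideanSpace ℝ (Fin d)), MemZygmundM d μ →
    ∀ (x t : EuclideanSpace ℝ (Fin d)) (h : ℝ), 0 < h → dist x t < h / 2 →
    |delta2M d μ x h - delta2M d μ t h| ≤
      C * zygMNorm d μ * ((dist x t / h) * Real.log (h / dist x t + 1)) := by
  have hCpos : (0:ℝ) < 32 * d := by
    have : (1:ℝ) ≤ (d:ℝ) := by exact_mod_cast hd
    linarith
  refine ⟨32 * d, hCpos, ?_⟩
  intro μ hμ x t h hh hdist
  obtain ⟨hM0, hM⟩ := zygMNorm_spec μ hμ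
  set M := zygMNorm d μ with hMdef
  set δ := dist x t with hδ
  have hδ0 : 0 ≤ δ := dist_nonneg
  have hRHS0 : 0 ≤ 32 * M * (δ / h * Real.log (h / δ + 1)) := by
    apply mul_nonneg (by linarith)
    apply mul_nonneg (div_nonneg hδ0 hh.le)
    apply Real.log_nonneg
    have : 0 ≤ h / δ := div_nonneg hh.le hδ0
    linarith
  -- generic single-coordinate estimate
  have hgen : ∀ (z : ES d) (i : Fin d) (r : ℝ), |r| ≤ δ →
      |delta2M d μ (mv z i r) h - delta2M d μ z h|
        ≤ 32 * M * (δ / h * Real.log (h / δ + 1)) := by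
    intro z i r hrd
    have hrh : |r| < h / 2 := lt_of_le_of_lt hrd hdist
    have hscale : ∀ u : ℝ, 0 < u → u ≤ δ →
        32 * M * (u / h * Real.log (h / u + 1)) ≤ 32 * M * (δ / h * Real.log (h / δ + 1)) := by
      intro u hu hud
      have hmono := rlog_mono hh hu hud
      have h32M : (0:ℝ) ≤ 32 * M := by linarith
      refine mul_le_mul_of_nonneg_left ?_ h32M
      rw [div_mul_eq_mul_div, div_mul_eq_mul_div]
      exact div_le_div_of_nonneg_right hmono hh.le
    rcases lt_trichotomy r 0 with hr | hr | hr
    · have habs : |r| = -r := abs_of_neg hr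
      have heq : mv (mv z i r) i (-r) = z := by rw [mv_mv]; simp [mv_zero]
      have hco := coord hd μ hh hM (mv z i r) i (s := -r) (by linarith)
        (by rw [habs] at hrh; exact hrh)
      rw [heq] at hco
      rw [abs_sub_comm]
      refine le_trans hco ?_
      exact hscale (-r) (by linarith) (by rw [habs] at hrd; exact hrd)
    · subst hr
      rw [mv_zero]
      simpa using hRHS0
    · have habs : |r| = r := abs_of_pos hr
      have hco := coord hd μ hh hM z i (s := r) hr.le (by rw [habs] at hrh; exact hrh)
      refine le_trans hco ?_
      exact hscale r hr (by rw [habs] at hrd; exact hrd)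
  -- the chain of intermediate points
  set p : ℕ → ES d := fun k => pt (fun i' => if (i' : ℕ) < k then t i' else x i') with hp
  have hp0 : p 0 = x := by
    ext i'
    simp [hp]
  have hpd : p d = t := by
    ext i'
    simp [hp, i'.2]
  have hterm : ∀ k, k < d → |delta2M d μ (p k) h - delta2M d μ (p (k+1)) h|
      ≤ 32 * M * (δ / h * Real.log (h / δ + 1)) := by
    intro k hk
    set i : Fin d := ⟨k, hk⟩ with hi
    have hik : (i : ℕ) = k := rfl
    set r : ℝ := t i - x i with hr
    have hstep : p (k+1) = mv (p k) i r := by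
      ext i'
      simp only [hp, pt_apply, mv, hr]
      by_cases hi' : i' = i
      · subst hi'
        rw [if_pos (show (i:ℕ) < k + 1 by rw [hik]; exact Nat.lt_succ_self k),
          if_neg (show ¬ ((i:ℕ) < k) by rw [hik]; exact lt_irrefl k), if_pos rfl]
        ring
      · rw [if_neg hi']
        by_cases hlt : (i':ℕ) < k
        · rw [if_pos hlt, if_pos (Nat.lt_succ_of_lt hlt), add_zero]
        · have hne : (i':ℕ) ≠ k := fun hc => hi' (Fin.ext (by rw [hik, hc]))
          have : ¬ ((i':ℕ) < k + 1) := by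
            intro hcon
            rcases Nat.lt_succ_iff_lt_or_eq.1 hcon with h1 | h1
            · exact hlt h1
            · exact hne h1
          rw [if_neg hlt, if_neg this, add_zero]
    have hrd : |r| ≤ δ := by
      rw [hr, abs_sub_comm]
      exact coord_le_dist x t i
    rw [abs_sub_comm, hstep]
    exact hgen (p k) i r hrd
  calc |delta2M d μ x h - delta2M d μ t h|
      = |delta2M d μ (p 0) h - delta2M d μ (p d) h| := by rw [hp0, hpd]
    _ ≤ ∑ k ∈ Finset.range d, |delta2M d μ (p k) h - delta2M d μ (p (k+1)) h| :=
        tele (fun k => delta2M d μ (p k) h) d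
    _ ≤ ∑ _k ∈ Finset.range d, 32 * M * (δ / h * Real.log (h / δ + 1)) :=
        Finset.sum_le_sum (fun k hk => hterm k (Finset.mem_range.1 hk))
    _ = (d:ℝ) * (32 * M * (δ / h * Real.log (h / δ + 1))) := by
        rw [Finset.sum_const, Finset.card_range, nsmul_eq_mul]
    _ = 32 * (d:ℝ) * M * (δ / h * Real.log (h / δ + 1)) := by ring
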